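/- arXiv:math/9911242 — 2 statements merged into one kernel-verified Lean document; each statement's English description precedes it below -/
import Mathlib

section
/- Let A be a k-linear Hom-finite additive category with a right Serre functor F, i.e. an additive functor F : A → A together with isomorphisms η_{A,B} : Hom(A,B) → Hom(B,FA)* natural in A and B (where (−)* denotes k-linear dual). Then F is fully faithful. -/
open CategoryTheory

/-- A right Serre functor on a `k`-linear Hom-finite additive category `A`:
an additive endofunctor `F` together with isomorphisms
`Hom(X,Y) ≅ Hom(Y,FX)*` which are natural in both variables. -/
structure RightSerreFunctor (k : Type) [Field k] (A : Type) [Category A]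
    [Preadditive A] [Linear k A] where
  F : A ⥤ A
  additive : F.Additive
  η : ∀ X Y : A, (X ⟶ Y) ≃ₗ[k] Module.Dual k (Y ⟶ F.obj X)
  nat_left : ∀ {X X' Y : A} (f : X' ⟶ X) (h : X ⟶ Y) (g : Y ⟶ F.obj X'),
    η X' Y (f ≫ h) g = η X Y h (g ≫ F.map f)
  nat_right : ∀ {X Y Y' : A} (h : X ⟶ Y) (g : Y ⟶ Y') (g' : Y' ⟶ F.obj X),
    η X Y' (h ≫ g) g' = η X Y h (g ≫ g')

/-- If a `k`-linear Hom-finite additive category has a right Serre functor `F`,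
then `F` is fully faithful. -/
theorem rightSerreFunctor_full_and_faithful (k : Type) [Field k] (A : Type)
    [Category A] [Preadditive A] [Linear k A]
    (hfin : ∀ X Y : A, FiniteDimensional k (X ⟶ Y))
    (S : RightSerreFunctor k A) :
    S.F.Full ∧ S.F.Faithful := by
  have key : ∀ (X Y : A) (f : X ⟶ Y) (g : Y ⟶ S.F.obj X),
      S.η Y (S.F.obj X) g (S.F.map f) = S.η X Y f g := by
    intro X Y f g
    have h1 := S.nat_left f g (𝟙 (S.F.obj X))
    have h2 := S.nat_right f g (𝟙 (S.F.obj X))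
    simp only [Category.id_comp, Category.comp_id] at h1 h2
    rw [← h1, h2]
  constructor
  · refine ⟨fun {X Y} u => ?_⟩
    -- the functional  g ↦ η_{Y,FX}(g)(u)
    set L : Module.Dual k (Y ⟶ S.F.obj X) :=
      ((Module.Dual.eval k (S.F.obj X ⟶ S.F.obj Y)) u).comp
        (S.η Y (S.F.obj X)).toLinearMap with hL
    refine ⟨(S.η X Y).symm L, ?_⟩
    -- show F.map f = u by testing against all duals
    have hdual : ∀ φ : Module.Dual k (S.F.obj X ⟶ S.F.obj Y),
        φ (S.F.map ((S.η X Y).symm L) - u) = 0 := by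
      intro φ
      obtain ⟨g, hg⟩ := (S.η Y (S.F.obj X)).surjective φ
      have := key X Y ((S.η X Y).symm L) g
      rw [(S.η X Y).apply_symm_apply] at this
      have hLg : L g = S.η Y (S.F.obj X) g u := rfl
      rw [hLg] at this
      rw [← hg, map_sub, this, sub_self]
    have := (Module.forall_dual_apply_eq_zero_iff k
      (S.F.map ((S.η X Y).symm L) - u)).mp hdual
    exact sub_eq_zero.mp this
  · refine ⟨fun {X Y} f f' h => ?_⟩
    apply (S.η X Y).injective
    ext g
    rw [← key X Y f g, ← key X Y f' g, h]
end

section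
/- Let A be a k-linear Hom-finite additive category. Suppose one is given, for each object A, an object F(A) and a k-linear map η_A : Hom(A,FA) → k such that the pairing Hom(A,B) × Hom(B,FA) → k defined by (f,g) ↦ η_A(g∘f) is non-degenerate for all objects A and B. Then F extends uniquely to a functor (with F(f) for f : A → B characterized by η_A(g∘f) = η_B(F(f)∘g) for all g : B → FA), and this functor together with the induced isomorphisms η_{A,B} : Hom(A,B) → Hom(B,FA)*, f ↦ η_A(−∘f), is a right Serre functor. -/
open CategoryTheory

section Aux

lemma serre_bij_of_nondeg {k : Type} {V W : Type v} [Field k] [AddCommGroup V] [Module k V]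
    [AddCommGroup W] [Module k W] [FiniteDimensional k V] [FiniteDimensional k W]
    (B : V →ₗ[k] W →ₗ[k] k)
    (h1 : ∀ v, v ≠ 0 → ∃ w, B v w ≠ 0)
    (h2 : ∀ w, w ≠ 0 → ∃ v, B v w ≠ 0) :
    Function.Bijective B ∧ Function.Bijective B.flip := by
  have hinj : Function.Injective B := by
    rw [← LinearMap.ker_eq_bot, LinearMap.ker_eq_bot']
    intro v hv
    by_contra h
    obtain ⟨w, hw⟩ := h1 v h
    exact hw (by rw [hv]; rfl)
  have hinj' : Function.Injective B.flip := by
    rw [← LinearMap.ker_eq_bot, LinearMap.ker_eq_bot']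
    intro w hw
    by_contra h
    obtain ⟨v, hv⟩ := h2 w h
    apply hv
    have : B.flip w v = 0 := by rw [hw]; rfl
    simpa using this
  have d1 : Module.finrank k V ≤ Module.finrank k W := by
    have := LinearMap.finrank_le_finrank_of_injective hinj
    rwa [Subspace.dual_finrank_eq] at this
  have d2 : Module.finrank k W ≤ Module.finrank k V := by
    have := LinearMap.finrank_le_finrank_of_injective hinj'
    rwa [Subspace.dual_finrank_eq] at this
  have hd : Module.finrank k V = Module.finrank k W := le_antisymm d1 d2
  constructor
  · exact ⟨hinj, (LinearMap.injective_iff_surjective_of_finrank_eq_finrank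
      (by rw [hd, Subspace.dual_finrank_eq])).mp hinj⟩
  · exact ⟨hinj', (LinearMap.injective_iff_surjective_of_finrank_eq_finrank
      (by rw [hd.symm, Subspace.dual_finrank_eq])).mp hinj'⟩

variable {k : Type} [Field k] {A : Type} [Category A] [Preadditive A] [Linear k A]
  (Fobj : A → A) (η : ∀ X : A, (X ⟶ Fobj X) →ₗ[k] k)

/-- The pairing `Hom(X,Y) × Hom(Y, FX) → k` as a bilinear map. -/
noncomputable def serrePairB (X Y : A) : (X ⟶ Y) →ₗ[k] (Y ⟶ Fobj X) →ₗ[k] k :=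
  LinearMap.mk₂ k (fun f g => η X (f ≫ g))
    (fun f f' g => by simp [Preadditive.add_comp])
    (fun c f g => by simp [Linear.smul_comp])
    (fun f g g' => by simp [Preadditive.comp_add])
    (fun c g g' => by simp [Linear.comp_smul])

variable (hfin : ∀ X Y : A, FiniteDimensional k (X ⟶ Y))
  (hnd₁ : ∀ (X Y : A) (f : X ⟶ Y), f ≠ 0 → ∃ g : Y ⟶ Fobj X, η X (f ≫ g) ≠ 0)
  (hnd₂ : ∀ (X Y : A) (g : Y ⟶ Fobj X), g ≠ 0 → ∃ f : X ⟶ Y, η X (f ≫ g) ≠ 0)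

include hfin hnd₁ hnd₂ in
lemma serrePairB_bij (X Y : A) :
    Function.Bijective (serrePairB Fobj η X Y) ∧
      Function.Bijective (serrePairB Fobj η X Y).flip := by
  haveI := hfin X Y
  haveI := hfin Y (Fobj X)
  exact serre_bij_of_nondeg (serrePairB Fobj η X Y)
    (fun f hf => hnd₁ X Y f hf) (fun g hg => hnd₂ X Y g hg)

/-- The action of the Serre functor on morphisms. -/
noncomputable def serreFmap {X Y : A} (f : X ⟶ Y) : Fobj X ⟶ Fobj Y :=
  (LinearEquiv.ofBijective (serrePairB Fobj η Y (Fobj X)).flip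
    (serrePairB_bij Fobj η hfin hnd₁ hnd₂ Y (Fobj X)).2).symm
    (serrePairB Fobj η X Y f)

lemma serreFmap_spec {X Y : A} (f : X ⟶ Y) (g : Y ⟶ Fobj X) :
    η Y (g ≫ serreFmap Fobj η hfin hnd₁ hnd₂ f) = η X (f ≫ g) := by
  have := (LinearEquiv.ofBijective (serrePairB Fobj η Y (Fobj X)).flip
    (serrePairB_bij Fobj η hfin hnd₁ hnd₂ Y (Fobj X)).2).apply_symm_apply
    (serrePairB Fobj η X Y f)
  rw [LinearEquiv.ofBijective_apply] at this
  exact LinearMap.congr_fun this g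

lemma serreFmap_unique {X Y : A} (f : X ⟶ Y) (h : Fobj X ⟶ Fobj Y)
    (hh : ∀ g : Y ⟶ Fobj X, η Y (g ≫ h) = η X (f ≫ g)) :
    h = serreFmap Fobj η hfin hnd₁ hnd₂ f := by
  apply (serrePairB_bij Fobj η hfin hnd₁ hnd₂ Y (Fobj X)).2.1
  ext g
  simp only [LinearMap.flip_apply]
  show η Y (g ≫ h) = η Y (g ≫ serreFmap Fobj η hfin hnd₁ hnd₂ f)
  rw [hh, serreFmap_spec]

end Aux

/-- Given the action of `F` on objects and linear maps `η_X : Hom(X, FX) → k` such that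
the pairings `Hom(X,Y) × Hom(Y,FX) → k`, `(f,g) ↦ η_X (f ≫ g)` are non-degenerate,
`F` extends uniquely to a functor (with `F.map f` characterized by
`η_X (f ≫ g) = η_Y (g ≫ F.map f)`), and this yields a right Serre functor whose
isomorphisms `η_{X,Y}` are induced by the pairings. -/
theorem rightSerreFunctor_of_trace (k : Type) [Field k] (A : Type)
    [Category A] [Preadditive A] [Linear k A]
    (hfin : ∀ X Y : A, FiniteDimensional k (X ⟶ Y))
    (Fobj : A → A) (η : ∀ X : A, (X ⟶ Fobj X) →ₗ[k] k)
    (hnd₁ : ∀ (X Y : A) (f : X ⟶ Y), f ≠ 0 → ∃ g : Y ⟶ Fobj X, η X (f ≫ g) ≠ 0)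
    (hnd₂ : ∀ (X Y : A) (g : Y ⟶ Fobj X), g ≠ 0 → ∃ f : X ⟶ Y, η X (f ≫ g) ≠ 0) :
    ∃ (S : RightSerreFunctor k A) (hF : ∀ X : A, S.F.obj X = Fobj X),
      (∀ (X Y : A) (f : X ⟶ Y) (g : Y ⟶ Fobj X),
        η X (f ≫ g) =
          η Y (g ≫ eqToHom (hF X).symm ≫ S.F.map f ≫ eqToHom (hF Y))) ∧
      (∀ (X Y : A) (f : X ⟶ Y) (g : Y ⟶ Fobj X),
        S.η X Y f (g ≫ eqToHom (hF X).symm) = η X (f ≫ g)) ∧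
      (∀ (Fmap : ∀ X Y : A, (X ⟶ Y) → (Fobj X ⟶ Fobj Y)),
        (∀ (X Y : A) (f : X ⟶ Y) (g : Y ⟶ Fobj X),
          η X (f ≫ g) = η Y (g ≫ Fmap X Y f)) →
        ∀ (X Y : A) (f : X ⟶ Y),
          Fmap X Y f = eqToHom (hF X).symm ≫ S.F.map f ≫ eqToHom (hF Y)) := by
  let Fm : ∀ {X Y : A}, (X ⟶ Y) → (Fobj X ⟶ Fobj Y) :=
    fun {X Y} f => serreFmap Fobj η hfin hnd₁ hnd₂ f
  have spec : ∀ {X Y : A} (f : X ⟶ Y) (g : Y ⟶ Fobj X),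
      η Y (g ≫ Fm f) = η X (f ≫ g) := fun f g => serreFmap_spec Fobj η hfin hnd₁ hnd₂ f g
  have uniq : ∀ {X Y : A} (f : X ⟶ Y) (h : Fobj X ⟶ Fobj Y),
      (∀ g : Y ⟶ Fobj X, η Y (g ≫ h) = η X (f ≫ g)) → h = Fm f :=
    fun f h hh => serreFmap_unique Fobj η hfin hnd₁ hnd₂ f h hh
  let F : A ⥤ A := {
    obj := Fobj
    map := fun f => Fm f
    map_id := fun X => by
      symm
      apply uniq
      intro g
      simp
    map_comp := fun {X Y Z} f f' => by
      symm
      apply uniq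
      intro g
      rw [← Category.assoc, spec f' (g ≫ Fm f), ← Category.assoc, spec f (f' ≫ g)]
      simp }
  have hadd : F.Additive := {
    map_add := fun {X Y f f'} => by
      show Fm (f + f') = Fm f + Fm f'
      symm
      apply uniq
      intro g
      rw [Preadditive.comp_add, map_add, spec f g, spec f' g, Preadditive.add_comp, map_add] }
  let e : ∀ X Y : A, (X ⟶ Y) ≃ₗ[k] Module.Dual k (Y ⟶ Fobj X) :=
    fun X Y => LinearEquiv.ofBijective (serrePairB Fobj η X Y)
      (serrePairB_bij Fobj η hfin hnd₁ hnd₂ X Y).1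
  have e_apply : ∀ (X Y : A) (f : X ⟶ Y) (g : Y ⟶ Fobj X),
      e X Y f g = η X (f ≫ g) := fun X Y f g => rfl
  let S : RightSerreFunctor k A := {
    F := F
    additive := hadd
    η := e
    nat_left := fun {X X' Y} f h g => by
      show η X' ((f ≫ h) ≫ g) = η X (h ≫ g ≫ Fm f)
      rw [← Category.assoc h g, spec f (h ≫ g)]
      simp
    nat_right := fun {X Y Y'} h g g' => by
      show η X ((h ≫ g) ≫ g') = η X (h ≫ g ≫ g')
      simp }
  refine ⟨S, fun X => rfl, ?_, ?_, ?_⟩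
  · intro X Y f g
    simp only [eqToHom_refl, Category.comp_id, Category.id_comp]
    exact (spec f g).symm
  · intro X Y f g
    simp only [eqToHom_refl, Category.comp_id]
    rfl
  · intro Fmap hFmap X Y f
    simp only [eqToHom_refl, Category.comp_id, Category.id_comp]
    exact uniq f (Fmap X Y f) (fun g => (hFmap X Y f g).symm)
end
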